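/- Let k be an integer with k > 1, let a₁ ∈ A₁ and b₁ ∈ Ab. Then there exists a group automorphism λ of G = ℤ[1/k] ⋊ ℤ such that λ(a) = a₁ and λ(b) = b₁, where a = (1,0) and b = (0,1). -/

import Mathlib

/-- The subring `ℤ[1/k] = {z·k^i : z, i ∈ ℤ}` of `ℚ`, as a set. -/
def zkSet (k : ℤ) : Set ℚ := {q | ∃ z i : ℤ, q = (z : ℚ) * (k : ℚ) ^ i}

theorem zkSet_neg {k : ℤ} {q : ℚ} (hq : q ∈ zkSet k) : -q ∈ zkSet k := by
  obtain ⟨z, i, rfl⟩ := hq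
  exact ⟨-z, i, by push_cast; ring⟩

theorem zkSet_mul_zpow {k : ℤ} (hk : (k : ℚ) ≠ 0) {q : ℚ} (hq : q ∈ zkSet k) (j : ℤ) :
    q * (k : ℚ) ^ j ∈ zkSet k := by
  obtain ⟨z, i, rfl⟩ := hq
  exact ⟨z, i + j, by rw [zpow_add₀ hk]; ring⟩

theorem zkSet_add {k : ℤ} (hk : (k : ℚ) ≠ 0) {p q : ℚ}
    (hp : p ∈ zkSet k) (hq : q ∈ zkSet k) : p + q ∈ zkSet k := by
  obtain ⟨z₁, i₁, rfl⟩ := hp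
  obtain ⟨z₂, i₂, rfl⟩ := hq
  rcases le_total i₁ i₂ with h | h
  · refine ⟨z₁ + z₂ * k ^ (i₂ - i₁).toNat, i₁, ?_⟩
    have hpow : ((k : ℚ)) ^ ((i₂ - i₁).toNat) = (k : ℚ) ^ (i₂ - i₁) := by
      rw [← zpow_natCast, Int.toNat_of_nonneg (by omega)]
    push_cast
    rw [hpow]
    have e : (k : ℚ) ^ (i₂ - i₁) * (k : ℚ) ^ i₁ = (k : ℚ) ^ i₂ := by
      rw [← zpow_add₀ hk, show i₂ - i₁ + i₁ = i₂ from by omega]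
    linear_combination (-(z₂ : ℚ)) * e
  · refine ⟨z₂ + z₁ * k ^ (i₁ - i₂).toNat, i₂, ?_⟩
    have hpow : ((k : ℚ)) ^ ((i₁ - i₂).toNat) = (k : ℚ) ^ (i₁ - i₂) := by
      rw [← zpow_natCast, Int.toNat_of_nonneg (by omega)]
    push_cast
    rw [hpow]
    have e : (k : ℚ) ^ (i₁ - i₂) * (k : ℚ) ^ i₂ = (k : ℚ) ^ i₁ := by
      rw [← zpow_add₀ hk, show i₁ - i₂ + i₂ = i₁ from by omega]
    linear_combination (-(z₁ : ℚ)) * e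

/-- The underlying set of the semidirect product `G = ℤ[1/k] ⋊ ℤ` (modelled inside
`ℚ × ℤ`): pairs `(y, m)` with multiplication `(y₁,m₁)(y₂,m₂) = (y₁ + y₂·k^{-m₁}, m₁+m₂)`. -/
@[ext]
structure BSQ (k : ℤ) : Type where
  y : ℚ
  m : ℤ

namespace BSQ

variable {k : ℤ}

instance : Mul (BSQ k) := ⟨fun g h => ⟨g.y + h.y * (k : ℚ) ^ (-g.m), g.m + h.m⟩⟩
instance : One (BSQ k) := ⟨⟨0, 0⟩⟩
instance : Inv (BSQ k) := ⟨fun g => ⟨-g.y * (k : ℚ) ^ g.m, -g.m⟩⟩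

@[simp] theorem mul_y (g h : BSQ k) : (g * h).y = g.y + h.y * (k : ℚ) ^ (-g.m) := rfl
@[simp] theorem mul_m (g h : BSQ k) : (g * h).m = g.m + h.m := rfl
@[simp] theorem one_y : (1 : BSQ k).y = 0 := rfl
@[simp] theorem one_m : (1 : BSQ k).m = 0 := rfl
@[simp] theorem inv_y (g : BSQ k) : g⁻¹.y = -g.y * (k : ℚ) ^ g.m := rfl
@[simp] theorem inv_m (g : BSQ k) : g⁻¹.m = -g.m := rfl

theorem kq_ne_zero [Fact (1 < k)] : (k : ℚ) ≠ 0 := by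
  have h : (1 : ℤ) < k := Fact.out
  have h' : (k : ℤ) ≠ 0 := by omega
  exact_mod_cast h'

private theorem mul_assoc' [Fact (1 < k)] (a b c : BSQ k) : a * b * c = a * (b * c) := by
  ext
  · simp only [mul_y, mul_m, neg_add, zpow_add₀ (kq_ne_zero (k := k))]
    ring
  · simp only [mul_m]
    ring

private theorem one_mul' [Fact (1 < k)] (a : BSQ k) : 1 * a = a := by
  ext <;> simp

private theorem mul_one' [Fact (1 < k)] (a : BSQ k) : a * 1 = a := by
  ext <;> simp

private theorem inv_mul_cancel' [Fact (1 < k)] (a : BSQ k) : a⁻¹ * a = 1 := by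
  ext
  · simp only [mul_y, inv_y, inv_m, one_y, neg_neg]
    ring
  · simp only [mul_m, inv_m, one_m]
    ring

/-- The group structure on `ℤ[1/k] ⋊ ℤ` (here on the ambient `ℚ ⋊ ℤ`). -/
instance [Fact (1 < k)] : Group (BSQ k) where
  mul := (· * ·)
  one := 1
  inv := Inv.inv
  mul_assoc := mul_assoc'
  one_mul := one_mul'
  mul_one := mul_one'
  inv_mul_cancel := inv_mul_cancel'

end BSQ

/-- The group `G = ℤ[1/k] ⋊ ℤ`, as the subgroup of `ℚ ⋊ ℤ` of pairs whose first
coordinate lies in `ℤ[1/k]`. -/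
def bsSubgroup (k : ℤ) [Fact (1 < k)] : Subgroup (BSQ k) where
  carrier := {g | g.y ∈ zkSet k}
  one_mem' := ⟨0, 0, by norm_num⟩
  mul_mem' := by
    intro a b ha hb
    exact zkSet_add BSQ.kq_ne_zero ha (zkSet_mul_zpow BSQ.kq_ne_zero hb _)
  inv_mem' := by
    intro a ha
    exact zkSet_mul_zpow BSQ.kq_ne_zero (zkSet_neg ha) _

theorem mem_bsSubgroup {k : ℤ} [Fact (1 < k)] {g : BSQ k} (h : g.y ∈ zkSet k) :
    g ∈ bsSubgroup k := h

theorem zkSet_mul {k : ℤ} (hk : (k : ℚ) ≠ 0) {p q : ℚ}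
    (hp : p ∈ zkSet k) (hq : q ∈ zkSet k) : p * q ∈ zkSet k := by
  obtain ⟨z₁, i₁, rfl⟩ := hp
  obtain ⟨z₂, i₂, rfl⟩ := hq
  exact ⟨z₁ * z₂, i₁ + i₂, by rw [zpow_add₀ hk]; push_cast; ring⟩

theorem zkSet_zpow {k : ℤ} (j : ℤ) : (k : ℚ) ^ j ∈ zkSet k := ⟨1, j, by simp⟩

/-- The cocycle `σ(m) = 1 + k⁻¹ + ⋯ + k^{-(m-1)}` in closed form. -/
noncomputable def sig (k : ℤ) (m : ℤ) : ℚ := (1 - (k : ℚ) ^ (-m)) * (k : ℚ) / ((k : ℚ) - 1)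

section sig

variable {k : ℤ} [Fact (1 < k)]

theorem kq_sub_one_ne_zero : (k : ℚ) - 1 ≠ 0 := by
  have h : (1 : ℤ) < k := Fact.out
  have : ((k : ℚ)) ≠ 1 := by exact_mod_cast (by omega : k ≠ 1)
  intro hc; apply this; linarith

omit [Fact (1 < k)] in
theorem sig_zero : sig k 0 = 0 := by simp [sig]

theorem sig_one : sig k 1 = 1 := by
  have hk := BSQ.kq_ne_zero (k := k)
  have h1 := kq_sub_one_ne_zero (k := k)
  rw [sig, zpow_neg_one]
  field_simp

theorem sig_add (m₁ m₂ : ℤ) :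
    sig k (m₁ + m₂) = sig k m₁ + sig k m₂ * (k : ℚ) ^ (-m₁) := by
  have hk := BSQ.kq_ne_zero (k := k)
  have h1 := kq_sub_one_ne_zero (k := k)
  rw [sig, sig, sig, neg_add, zpow_add₀ hk]
  field_simp
  ring

theorem sig_succ (m : ℤ) : sig k (m + 1) = sig k m + (k : ℚ) ^ (-m) := by
  rw [sig_add, sig_one, one_mul]

theorem sig_mem : ∀ m : ℤ, sig k m ∈ zkSet k := by
  have hk := BSQ.kq_ne_zero (k := k)
  intro m
  induction m using Int.induction_on with
  | zero => rw [sig_zero]; exact ⟨0, 0, by norm_num⟩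
  | succ n ih => rw [sig_succ]; exact zkSet_add hk ih (zkSet_zpow _)
  | pred n ih =>
      have h : sig k (-(n : ℤ) - 1) = sig k (-n) - (k : ℚ) ^ ((n : ℤ) + 1) := by
        have := sig_succ (k := k) (-(n : ℤ) - 1)
        rw [show -(n : ℤ) - 1 + 1 = -n from by ring] at this
        rw [this]; ring_nf
      rw [h, sub_eq_add_neg]
      exact zkSet_add hk ih (by simpa using zkSet_neg (zkSet_zpow ((n : ℤ) + 1)))

end sig

/-- **Lemma 5.** For `a₁ = (w,0) ∈ A₁` (`w` a unit of `ℤ[1/k]`) and `b₁ = (y,1) ∈ Ab`,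
the map `a ↦ a₁`, `b ↦ b₁` (where `a = (1,0)`, `b = (0,1)`) extends to an automorphism
of `G = ℤ[1/k] ⋊ ℤ`. -/
theorem exists_automorphism (k : ℤ) [Fact (1 < k)] (w y : ℚ)
    (hw : w ∈ zkSet k) (hw' : ∃ v ∈ zkSet k, w * v = 1) (hy : y ∈ zkSet k) :
    ∃ lam : ↥(bsSubgroup k) ≃* ↥(bsSubgroup k),
      lam ⟨⟨1, 0⟩, mem_bsSubgroup ⟨1, 0, by norm_num⟩⟩ = ⟨⟨w, 0⟩, mem_bsSubgroup hw⟩ ∧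
      lam ⟨⟨0, 1⟩, mem_bsSubgroup ⟨0, 0, by norm_num⟩⟩ = ⟨⟨y, 1⟩, mem_bsSubgroup hy⟩ := by
  obtain ⟨v, hv, hwv⟩ := hw'
  have hk := BSQ.kq_ne_zero (k := k)
  have hmem : ∀ g : ↥(bsSubgroup k), g.1.y ∈ zkSet k := fun g => g.2
  refine ⟨{
    toFun := fun g => ⟨⟨w * g.1.y + y * sig k g.1.m, g.1.m⟩,
      mem_bsSubgroup (zkSet_add hk (zkSet_mul hk hw (hmem g)) (zkSet_mul hk hy (sig_mem _)))⟩
    invFun := fun g => ⟨⟨v * (g.1.y - y * sig k g.1.m), g.1.m⟩,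
      mem_bsSubgroup (by
        have h := zkSet_add hk (hmem g) (zkSet_neg (zkSet_mul hk hy (sig_mem g.1.m)))
        simpa [sub_eq_add_neg] using zkSet_mul hk hv h)⟩
    left_inv := fun g => by
      refine Subtype.ext (BSQ.ext ?_ rfl)
      show v * ((w * g.1.y + y * sig k g.1.m) - y * sig k g.1.m) = g.1.y
      linear_combination g.1.y * hwv
    right_inv := fun g => by
      refine Subtype.ext (BSQ.ext ?_ rfl)
      show w * (v * (g.1.y - y * sig k g.1.m)) + y * sig k g.1.m = g.1.y
      linear_combination (g.1.y - y * sig k g.1.m) * hwv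
    map_mul' := fun g h => by
      refine Subtype.ext (BSQ.ext ?_ rfl)
      show w * (g.1.y + h.1.y * (k : ℚ) ^ (-g.1.m)) + y * sig k (g.1.m + h.1.m)
          = (w * g.1.y + y * sig k g.1.m)
            + (w * h.1.y + y * sig k h.1.m) * (k : ℚ) ^ (-g.1.m)
      rw [sig_add]; ring }, ?_, ?_⟩
  · refine Subtype.ext (BSQ.ext ?_ rfl)
    show w * 1 + y * sig k 0 = w
    rw [sig_zero]; ring
  · refine Subtype.ext (BSQ.ext ?_ rfl)
    show w * 0 + y * sig k 1 = y
    rw [sig_one]; ring
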